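/- Let K ⊂ ℝⁿ be a nonempty compact set and let B̄_r(x₀) be its minimal bounding ball with bounding sphere S_r(x₀) = ∂B_r(x₀). Then x₀ belongs to the convex hull of K ∩ S_r(x₀). -/

import Mathlib

open Filter Metric Set
open scoped Topology RealInnerProductSpace

/-- The convex envelope of `g`: pointwise supremum of convex functions below `g`. -/
noncomputable def convEnv {E : Type*} [NormedAddCommGroup E] [NormedSpace ℝ E]
    (g : E → ℝ) (x : E) : ℝ :=
  sSup {y : ℝ | ∃ h : E → ℝ, ConvexOn ℝ Set.univ h ∧ (∀ z, h z ≤ g z) ∧ y = h x}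

/-- Upper compensated convex transform. -/
noncomputable def upperT {E : Type*} [NormedAddCommGroup E] [NormedSpace ℝ E]
    (lam : ℝ) (g : E → ℝ) (x : E) : ℝ :=
  lam * ‖x‖ ^ 2 - convEnv (fun y => lam * ‖y‖ ^ 2 - g y) x

/-- Lower compensated convex transform. -/
noncomputable def lowerT {E : Type*} [NormedAddCommGroup E] [NormedSpace ℝ E]
    (lam : ℝ) (g : E → ℝ) (x : E) : ℝ :=
  convEnv (fun y => g y + lam * ‖y‖ ^ 2) x - lam * ‖x‖ ^ 2

/-- `(c, r)` is a minimal bounding ball of `K`. -/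
def IsMinBall {E : Type*} [NormedAddCommGroup E] (K : Set E) (c : E) (r : ℝ) : Prop :=
  0 ≤ r ∧ K ⊆ Metric.closedBall c r ∧ ∀ c' r', K ⊆ Metric.closedBall c' r' → r ≤ r'


lemma isCompact_convexHull_of_isCompact {n : ℕ} {S : Set (EuclideanSpace ℝ (Fin n))}
    (hS : IsCompact S) : IsCompact (convexHull ℝ S) := by
  classical
  rcases S.eq_empty_or_nonempty with rfl | ⟨s₀, hs₀⟩
  · simp
  set m := n + 1 with hm
  set φ : ((Fin m → ℝ) × (Fin m → EuclideanSpace ℝ (Fin n))) → EuclideanSpace ℝ (Fin n) := fun p => ∑ i, p.1 i • p.2 i with hφ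
  have hcont : Continuous φ := by
    apply continuous_finset_sum
    intro i _
    exact ((continuous_apply i).comp continuous_fst).smul
      ((continuous_apply i).comp continuous_snd)
  have hD : IsCompact ((stdSimplex ℝ (Fin m)) ×ˢ (Set.univ.pi fun _ : Fin m => S)) :=
    (isCompact_stdSimplex (𝕜 := ℝ) (ι := Fin m)).prod (isCompact_univ_pi fun _ => hS)
  have himg : convexHull ℝ S
      = φ '' ((stdSimplex ℝ (Fin m)) ×ˢ (Set.univ.pi fun _ : Fin m => S)) := by
    apply Subset.antisymm
    · intro x hx
      obtain ⟨ι, hfin, z, w, hzs, hai, hw0, hw1, hsum⟩ :=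
        eq_pos_convex_span_of_mem_convexHull hx
      have hcard : Fintype.card ι ≤ m := by
        have h1 := hai.card_le_finrank_succ
        have h2 := Submodule.finrank_le (vectorSpan ℝ (Set.range z))
        have h3 : Module.finrank ℝ (EuclideanSpace ℝ (Fin n)) = n :=
          finrank_euclideanSpace_fin
        omega
      obtain ⟨e⟩ := Function.Embedding.nonempty_of_card_le (α := ι) (β := Fin m)
        (by simpa using hcard)
      set w' : Fin m → ℝ := Function.extend e w (fun _ => (0:ℝ)) with hw'def
      set z' : Fin m → EuclideanSpace ℝ (Fin n) := Function.extend e z (fun _ => s₀) with hz'def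
      have hw'e : ∀ i, w' (e i) = w i := fun i => e.injective.extend_apply w _ i
      have hz'e : ∀ i, z' (e i) = z i := fun i => e.injective.extend_apply z _ i
      have hw'zero : ∀ j, (¬∃ i, e i = j) → w' j = 0 := fun j hj =>
        Function.extend_apply' w _ j hj
      have hnotmem : ∀ j ∈ Finset.univ, j ∉ Finset.univ.map e → w' j = 0 := by
        intro j _ hj
        apply hw'zero
        intro ⟨i, hi⟩
        exact hj (Finset.mem_map.mpr ⟨i, Finset.mem_univ i, hi⟩)
      have hsum1 : ∑ j, w' j = 1 := by
        calc ∑ j, w' j = ∑ j ∈ Finset.univ.map e, w' j :=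
              (Finset.sum_subset (Finset.subset_univ _) hnotmem).symm
          _ = ∑ i, w' (e i) := Finset.sum_map _ _ _
          _ = ∑ i, w i := by simp [hw'e]
          _ = 1 := hw1
      have hval : ∑ j, w' j • z' j = x := by
        calc ∑ j, w' j • z' j = ∑ j ∈ Finset.univ.map e, w' j • z' j :=
              (Finset.sum_subset (Finset.subset_univ _) (by
                intro j hj hj'
                rw [hnotmem j hj hj', zero_smul])).symm
          _ = ∑ i, w' (e i) • z' (e i) := Finset.sum_map _ _ _
          _ = ∑ i, w i • z i := by simp [hw'e, hz'e]
          _ = x := hsum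
      refine ⟨(w', z'), ⟨⟨?_, hsum1⟩, ?_⟩, hval⟩
      · intro j
        show 0 ≤ w' j
        by_cases hj : ∃ i, e i = j
        · obtain ⟨i, rfl⟩ := hj
          rw [hw'e]
          exact (hw0 i).le
        · rw [hw'zero j hj]
      · intro j _
        show z' j ∈ S
        by_cases hj : ∃ i, e i = j
        · obtain ⟨i, rfl⟩ := hj
          rw [hz'e]
          exact hzs (Set.mem_range_self i)
        · rw [hz'def, Function.extend_apply' z _ j hj]
          exact hs₀
    · rintro x ⟨⟨w, z⟩, ⟨⟨hw0, hw1⟩, hz⟩, rfl⟩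
      exact (convex_convexHull ℝ S).sum_mem (fun i _ => hw0 i) hw1
        (fun i _ => subset_convexHull ℝ S (hz i (Set.mem_univ i)))
  rw [himg]
  exact hD.image hcont


set_option maxHeartbeats 1000000 in
theorem stmt_6 {n : ℕ} (K : Set (EuclideanSpace ℝ (Fin n))) (hK : K.Nonempty)
    (hKc : IsCompact K) (x₀ : EuclideanSpace ℝ (Fin n)) (r : ℝ)
    (hmin : IsMinBall K x₀ r) :
    x₀ ∈ convexHull ℝ (K ∩ Metric.sphere x₀ r) := by
  classical
  by_contra h
  obtain ⟨hr0, hKB, hminle⟩ := hmin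
  -- Case r = 0
  rcases eq_or_lt_of_le hr0 with hr | hr
  · obtain ⟨y, hy⟩ := hK
    have hyd : dist y x₀ ≤ r := Metric.mem_closedBall.mp (hKB hy)
    have hyx : y = x₀ := by
      have : dist y x₀ = 0 := le_antisymm (by linarith [hr]) dist_nonneg
      exact dist_le_zero.mp this.le
    exact h (subset_convexHull ℝ _ ⟨hyx ▸ hy, by simp [Metric.mem_sphere, hyx, ← hr]⟩)
  -- Case r > 0
  set S := K ∩ Metric.sphere x₀ r with hSdef
  have hScpt : IsCompact S := hKc.inter_right Metric.isClosed_sphere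
  have hCcl : IsClosed (convexHull ℝ S) := (isCompact_convexHull_of_isCompact hScpt).isClosed
  obtain ⟨f, u, hfx, hfb⟩ :=
    geometric_hahn_banach_point_closed (convex_convexHull ℝ S) hCcl h
  set δ := u - f x₀ with hδdef
  have hδ0 : 0 < δ := sub_pos.mpr hfx
  set v := (InnerProductSpace.toDual ℝ (EuclideanSpace ℝ (Fin n))).symm f with hvdef
  have hvf : ∀ z, ⟪v, z⟫ = f z := fun z => InnerProductSpace.toDual_symm_apply
  set K' := {y ∈ K | f y ≤ f x₀ + δ / 2} with hK'def
  have hK'cpt : IsCompact K' :=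
    hKc.inter_right (isClosed_le f.continuous continuous_const)
  have hK'lt : ∀ y ∈ K', dist y x₀ < r := by
    intro y hy
    rcases hy with ⟨hyK, hyf⟩
    rcases lt_or_eq_of_le (Metric.mem_closedBall.mp (hKB hyK)) with h' | h'
    · exact h'
    · exfalso
      have hyS : y ∈ S := ⟨hyK, h'⟩
      have := hfb y (subset_convexHull ℝ S hyS)
      simp only [hδdef] at hyf
      linarith
  obtain ⟨ρ, hρr, hρ⟩ : ∃ ρ, ρ < r ∧ ∀ y ∈ K', dist y x₀ ≤ ρ := by
    rcases K'.eq_empty_or_nonempty with he | hne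
    · exact ⟨0, hr, by simp [he]⟩
    · obtain ⟨y₁, hy₁, hmax⟩ :=
        hK'cpt.exists_isMaxOn hne (Continuous.continuousOn (by continuity)
          (f := fun y => dist y x₀))
      exact ⟨dist y₁ x₀, hK'lt y₁ hy₁, fun y hy => hmax hy⟩
  set t := min ((r - ρ) / (‖v‖ + 1)) (δ / (‖v‖ ^ 2 + 1)) with htdef
  have hv1 : (0:ℝ) < ‖v‖ + 1 := by positivity
  have hv2 : (0:ℝ) < ‖v‖ ^ 2 + 1 := by positivity
  have ht0 : 0 < t := lt_min (div_pos (by linarith) hv1) (div_pos hδ0 hv2)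
  have htv : t * ‖v‖ < r - ρ := by
    have h1 : t ≤ (r - ρ) / (‖v‖ + 1) := min_le_left _ _
    have h2 : t * ‖v‖ ≤ (r - ρ) / (‖v‖ + 1) * ‖v‖ :=
      mul_le_mul_of_nonneg_right h1 (norm_nonneg v)
    have h3 : (r - ρ) / (‖v‖ + 1) * ‖v‖ < r - ρ := by
      rw [div_mul_eq_mul_div, div_lt_iff₀ hv1]
      nlinarith [norm_nonneg v, sub_pos.mpr hρr]
    linarith
  have htv2 : t * ‖v‖ ^ 2 ≤ δ := by
    have h1 : t ≤ δ / (‖v‖ ^ 2 + 1) := min_le_right _ _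
    have h2 : t * ‖v‖ ^ 2 ≤ δ / (‖v‖ ^ 2 + 1) * ‖v‖ ^ 2 :=
      mul_le_mul_of_nonneg_right h1 (by positivity)
    have h3 : δ / (‖v‖ ^ 2 + 1) * ‖v‖ ^ 2 ≤ δ := by
      rw [div_mul_eq_mul_div, div_le_iff₀ hv2]
      nlinarith [sq_nonneg ‖v‖]
    linarith
  set c := x₀ + t • v with hcdef
  have hxc : dist x₀ c = t * ‖v‖ := by
    rw [hcdef, dist_eq_norm]
    simp [norm_smul, abs_of_pos ht0]
  have hall : ∀ y ∈ K, dist y c < r := by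
    intro y hyK
    by_cases hy' : y ∈ K'
    · calc dist y c ≤ dist y x₀ + dist x₀ c := dist_triangle _ _ _
        _ ≤ ρ + t * ‖v‖ := by rw [hxc]; exact add_le_add_left (hρ y hy') _
        _ < r := by linarith
    · have hyf : f x₀ + δ / 2 < f y := by
        by_contra hcon
        exact hy' ⟨hyK, le_of_not_gt hcon⟩
      have hsq : dist y c ^ 2 < r ^ 2 := by
        have hdist : dist y c ^ 2
            = ‖y - x₀‖ ^ 2 - 2 * (t * (f y - f x₀)) + t ^ 2 * ‖v‖ ^ 2 := by
          have : y - c = (y - x₀) - t • v := by rw [hcdef]; abel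
          rw [dist_eq_norm, this, norm_sub_sq_real, real_inner_smul_right,
            norm_smul, real_inner_comm, hvf, map_sub]
          simp [abs_of_pos ht0]
          ring
        have hyr : ‖y - x₀‖ ^ 2 ≤ r ^ 2 := by
          have : ‖y - x₀‖ ≤ r := by
            rw [← dist_eq_norm]; exact Metric.mem_closedBall.mp (hKB hyK)
          nlinarith [norm_nonneg (y - x₀)]
        have h2 : t * δ < 2 * (t * (f y - f x₀)) := by
          have : δ / 2 < f y - f x₀ := by simp only [hδdef] at hyf ⊢; linarith
          nlinarith
        nlinarith [ht0, htv2]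
      exact lt_of_pow_lt_pow_left₀ 2 hr0 hsq
  obtain ⟨y₂, hy₂, hmax⟩ :=
    hKc.exists_isMaxOn hK (Continuous.continuousOn (by continuity)
      (f := fun y => dist y c))
  have hle : r ≤ dist y₂ c :=
    hminle c (dist y₂ c) (fun y hy => Metric.mem_closedBall.mpr (hmax hy))
  exact absurd hle (not_le.mpr (hall y₂ hy₂))
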